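/- Let p, q ≥ 1, let Θ be a real p×p matrix and Ψ a real q×q matrix with tr(Θ) ≠ 0, set ρ = tr(Ψ)/tr(Θ), assume q + ρp ≠ 0, and let Ω = Θ⊕Ψ. Then the diagonals of Θ and Ψ are recovered from Ω by: diag(Θ) = (1/q)[ diag( Σ_{i=1}^q (I_p⊗e_{q,i})^T Ω (I_p⊗e_{q,i}) ) − (ρ/(q+ρp))·tr(Ω)·I_p ] and diag(Ψ) = (1/p)[ diag( Σ_{j=1}^p (e_{p,j}⊗I_q)^T Ω (e_{p,j}⊗I_q) ) − (1/(q+ρp))·tr(Ω)·I_q ]; equivalently, [Θ]_{jj} = (1/q)( Σ_{i=(j-1)q+1}^{jq} [Ω]_{ii} − (ρ/(q+ρp))·tr(Ω) ) for each j. -/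

import Mathlib

open Matrix
open scoped Kronecker

namespace EiGLasso

/-- The Kronecker sum `Θ ⊕ Ψ = Θ ⊗ I_q + I_p ⊗ Ψ`. -/
def kronSum {p q : ℕ} (A : Matrix (Fin p) (Fin p) ℝ) (B : Matrix (Fin q) (Fin q) ℝ) :
    Matrix (Fin p × Fin q) (Fin p × Fin q) ℝ :=
  A ⊗ₖ (1 : Matrix (Fin q) (Fin q) ℝ) + (1 : Matrix (Fin p) (Fin p) ℝ) ⊗ₖ B

/-- The `pq × p` selection matrix `I_p ⊗ e_{q,i}`, where `e_{q,i}` is the `i`-th one-hot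
vector in `ℝ^q`.  Row `(j', i')` (i.e. row `(j'-1)q + i'`), column `j`. -/
def selTheta (p q : ℕ) (i : Fin q) : Matrix (Fin p × Fin q) (Fin p) ℝ :=
  Matrix.of fun x j => if x = (j, i) then (1 : ℝ) else 0

/-- The `pq × q` selection matrix `e_{p,j} ⊗ I_q`. -/
def selPsi (p q : ℕ) (j : Fin p) : Matrix (Fin p × Fin q) (Fin q) ℝ :=
  Matrix.of fun x i => if x = (j, i) then (1 : ℝ) else 0

/-- `P_Θ = ∑_{i=1}^q I_p ⊗ e_{q,i} ⊗ I_p ⊗ e_{q,i}`, a `p²q² × p²` matrix. -/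
def Ptheta (p q : ℕ) : Matrix ((Fin p × Fin q) × (Fin p × Fin q)) (Fin p × Fin p) ℝ :=
  ∑ i : Fin q, (selTheta p q i) ⊗ₖ (selTheta p q i)

/-- `P_Ψ = ∑_{j=1}^p e_{p,j} ⊗ I_q ⊗ e_{p,j} ⊗ I_q`, a `p²q² × q²` matrix. -/
def Ppsi (p q : ℕ) : Matrix ((Fin p × Fin q) × (Fin p × Fin q)) (Fin q × Fin q) ℝ :=
  ∑ j : Fin p, (selPsi p q j) ⊗ₖ (selPsi p q j)

/-- Column-stacking vectorization: `vec(A)` at index `(j, i)` (i.e. `(j-1)m + i`) is `A i j`. -/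
def vec {m n : Type*} (A : Matrix m n ℝ) : n × m → ℝ := fun x => A x.2 x.1


lemma kronSum_diag {p q : ℕ} (Θ : Matrix (Fin p) (Fin p) ℝ) (Ψ : Matrix (Fin q) (Fin q) ℝ)
    (j : Fin p) (i : Fin q) : kronSum Θ Ψ (j, i) (j, i) = Θ j j + Ψ i i := by
  simp [kronSum, Matrix.one_apply]

lemma trace_kronSum {p q : ℕ} (Θ : Matrix (Fin p) (Fin p) ℝ) (Ψ : Matrix (Fin q) (Fin q) ℝ) :
    (kronSum Θ Ψ).trace = q * Θ.trace + p * Ψ.trace := by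
  simp [kronSum, Matrix.trace_add, Matrix.trace_kronecker]
  ring

lemma selTheta_conj {p q : ℕ} (Ω : Matrix (Fin p × Fin q) (Fin p × Fin q) ℝ)
    (i : Fin q) (j : Fin p) :
    ((selTheta p q i)ᵀ * Ω * selTheta p q i) j j = Ω (j, i) (j, i) := by
  simp [mul_apply, selTheta, Fintype.sum_prod_type]

lemma selPsi_conj {p q : ℕ} (Ω : Matrix (Fin p × Fin q) (Fin p × Fin q) ℝ)
    (j : Fin p) (i : Fin q) :
    ((selPsi p q j)ᵀ * Ω * selPsi p q j) i i = Ω (j, i) (j, i) := by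
  simp [mul_apply, selPsi, Fintype.sum_prod_type]

/-- Identification of the diagonals of `Θ` and `Ψ` from `Ω = Θ ⊕ Ψ`
and the trace ratio `ρ = tr(Ψ)/tr(Θ)`. -/
theorem diag_identification (p q : ℕ) (hp : 1 ≤ p) (hq : 1 ≤ q)
    (Θ : Matrix (Fin p) (Fin p) ℝ) (Ψ : Matrix (Fin q) (Fin q) ℝ)
    (htΘ : Θ.trace ≠ 0)
    (hden : (q : ℝ) + (Ψ.trace / Θ.trace) * p ≠ 0) :
    (∀ j : Fin p,
      Θ j j = (1 / q) *
        ((∑ i : Fin q, (selTheta p q i)ᵀ * kronSum Θ Ψ * selTheta p q i) j j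
          - (Ψ.trace / Θ.trace) / ((q : ℝ) + (Ψ.trace / Θ.trace) * p)
            * (kronSum Θ Ψ).trace)) ∧
    (∀ i : Fin q,
      Ψ i i = (1 / p) *
        ((∑ j : Fin p, (selPsi p q j)ᵀ * kronSum Θ Ψ * selPsi p q j) i i
          - 1 / ((q : ℝ) + (Ψ.trace / Θ.trace) * p)
            * (kronSum Θ Ψ).trace)) ∧
    (∀ j : Fin p,
      Θ j j = (1 / q) * ((∑ i : Fin q, kronSum Θ Ψ (j, i) (j, i))
          - (Ψ.trace / Θ.trace) / ((q : ℝ) + (Ψ.trace / Θ.trace) * p)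
            * (kronSum Θ Ψ).trace)) := by
  have hq0 : (q : ℝ) ≠ 0 := by positivity
  have hp0 : (p : ℝ) ≠ 0 := by positivity
  have hden2 : Ψ.trace * (p : ℝ) + (q : ℝ) * Θ.trace ≠ 0 := by
    have h : (q : ℝ) + Ψ.trace / Θ.trace * p = (Ψ.trace * p + q * Θ.trace) / Θ.trace := by
      field_simp; ring
    rw [h, div_ne_zero_iff] at hden
    exact hden.1
  have expand : (q : ℝ) * Θ.trace + p * Ψ.trace
      = ((q : ℝ) + Ψ.trace / Θ.trace * p) * Θ.trace := by
    field_simp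
  have key1 : (Ψ.trace / Θ.trace) / ((q : ℝ) + (Ψ.trace / Θ.trace) * p)
      * (kronSum Θ Ψ).trace = Ψ.trace := by
    rw [trace_kronSum, expand, ← mul_assoc, div_mul_cancel₀ _ hden,
      div_mul_cancel₀ _ htΘ]
  have key2 : 1 / ((q : ℝ) + (Ψ.trace / Θ.trace) * p)
      * (kronSum Θ Ψ).trace = Θ.trace := by
    rw [trace_kronSum, expand, ← mul_assoc, one_div, inv_mul_cancel₀ hden, one_mul]
  have hdiag : ∀ j : Fin p, (∑ i : Fin q, kronSum Θ Ψ (j, i) (j, i))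
      = q * Θ j j + Ψ.trace := by
    intro j
    simp [kronSum_diag, Finset.sum_add_distrib, Matrix.trace]
    try ring
  refine ⟨fun j => ?_, fun i => ?_, fun j => ?_⟩
  · rw [Matrix.sum_apply]
    simp only [selTheta_conj]
    rw [hdiag j, key1]
    field_simp
    ring
  · rw [Matrix.sum_apply]
    simp only [selPsi_conj]
    have : (∑ j : Fin p, kronSum Θ Ψ (j, i) (j, i)) = p * Ψ i i + Θ.trace := by
      simp [kronSum_diag, Finset.sum_add_distrib, Matrix.trace]
      try ring
    rw [this, key2]
    field_simp
    ring
  · rw [hdiag j, key1]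
    field_simp
    ring


end EiGLasso
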